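/- Let 0 < π0 < π1 < 1 and let q*(π0,π1) = log((1−π0)/(1−π1)) / log( π1(1−π0) / (π0(1−π1)) ) be the break-even detection probability. Then π0 < q*(π0,π1) < π1; in particular q*(π0,π1) ∈ (0,1). -/

import Mathlib

/-- Break-even detection probability `q*(π0, π1)`. -/
noncomputable def qstar (π0 π1 : ℝ) : ℝ :=
  Real.log ((1 - π0) / (1 - π1)) / Real.log (π1 * (1 - π0) / (π0 * (1 - π1)))

/-- The break-even detection probability lies strictly between `π0` and `π1`;
in particular it lies in `(0,1)`. -/
theorem stmt10 (π0 π1 : ℝ) (hπ0 : 0 < π0) (hπ01 : π0 < π1) (hπ1 : π1 < 1) :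
    π0 < qstar π0 π1 ∧ qstar π0 π1 < π1 ∧
    0 < qstar π0 π1 ∧ qstar π0 π1 < 1 := by
  have h0 : 0 < 1 - π1 := by linarith
  have h1 : 0 < 1 - π0 := by linarith
  have hπ1pos : 0 < π1 := lt_trans hπ0 hπ01
  set a := Real.log π1 - Real.log π0 with ha_def
  set b := Real.log (1 - π0) - Real.log (1 - π1) with hb_def
  have hq : qstar π0 π1 = b / (a + b) := by
    unfold qstar
    rw [Real.log_div (by positivity) (by positivity),
        Real.log_div (by positivity) (by positivity),
        Real.log_mul (by positivity) (by positivity),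
        Real.log_mul (by positivity) (by positivity)]
    ring_nf
    rw [ha_def, hb_def]; ring
  have A1 : π0 * a < π1 - π0 := by
    have h := Real.log_lt_sub_one_of_pos (show (0:ℝ) < π1 / π0 by positivity)
      (ne_of_gt ((one_lt_div hπ0).mpr hπ01))
    rw [Real.log_div (ne_of_gt hπ1pos) (ne_of_gt hπ0)] at h
    have h2 := (lt_div_iff₀ hπ0).mp (show a + 1 < π1 / π0 by linarith)
    nlinarith
  have A2 : π1 - π0 < π1 * a := by
    have h := Real.log_lt_sub_one_of_pos (show (0:ℝ) < π0 / π1 by positivity)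
      (ne_of_lt ((div_lt_one hπ1pos).mpr hπ01))
    rw [Real.log_div (ne_of_gt hπ0) (ne_of_gt hπ1pos)] at h
    have h2 := (lt_div_iff₀ hπ1pos).mp (show -a + 1 < π0 / π1 by linarith)
    nlinarith
  have B1 : (1 - π1) * b < π1 - π0 := by
    have h := Real.log_lt_sub_one_of_pos (show (0:ℝ) < (1 - π0) / (1 - π1) by positivity)
      (ne_of_gt ((one_lt_div h0).mpr (by linarith)))
    rw [Real.log_div (ne_of_gt h1) (ne_of_gt h0)] at h
    have h2 := (lt_div_iff₀ h0).mp (show b + 1 < (1 - π0) / (1 - π1) by linarith)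
    nlinarith
  have B2 : π1 - π0 < (1 - π0) * b := by
    have h := Real.log_lt_sub_one_of_pos (show (0:ℝ) < (1 - π1) / (1 - π0) by positivity)
      (ne_of_lt ((div_lt_one h1).mpr (by linarith)))
    rw [Real.log_div (ne_of_gt h0) (ne_of_gt h1)] at h
    have h2 := (lt_div_iff₀ h1).mp (show -b + 1 < (1 - π1) / (1 - π0) by linarith)
    nlinarith
  have ha : 0 < a := by nlinarith
  have hb : 0 < b := by nlinarith
  have hab : 0 < a + b := by linarith
  have left : π0 < qstar π0 π1 := by
    rw [hq, lt_div_iff₀ hab]; nlinarith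
  have right : qstar π0 π1 < π1 := by
    rw [hq, div_lt_iff₀ hab]; nlinarith
  exact ⟨left, right, by linarith, by linarith⟩
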